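/- Let ψ > 0 and ε ≥ 0, and let R(x) = Φ(ψ + Φ⁻¹(x)) on (0,1). Then at the point x₀ = Φ(−ψ/2 − ε/ψ) ∈ (0,1), the derivative of R equals e^ε, i.e. deriv R x₀ = e^ε, and R(x₀) = Φ(ψ/2 − ε/ψ); consequently the tangent line to the graph of R with slope e^ε has y-intercept R(x₀) − e^ε·x₀ = Φ(ψ/2 − ε/ψ) − e^ε·Φ(−ψ/2 − ε/ψ). -/

import Mathlib

open MeasureTheory ProbabilityTheory Real

/-- `Φ`, the cumulative distribution function of the standard normal distribution. -/
noncomputable def stdNormalCDF (x : ℝ) : ℝ := ((gaussianReal 0 1) (Set.Iic x)).toReal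

/-- `Φ⁻¹`, the standard normal quantile function (inverse of `Φ`). -/
noncomputable def stdNormalCDFInv : ℝ → ℝ := Function.invFun stdNormalCDF

section aux
open Filter Set Topology

lemma stdNormal_pdf_continuous : Continuous (gaussianPDFReal 0 1) := by
  rw [gaussianPDFReal_def]
  fun_prop

lemma stdNormal_pdf_pos (x : ℝ) : 0 < gaussianPDFReal 0 1 x :=
  gaussianPDFReal_pos 0 1 x one_ne_zero

lemma stdNormalCDF_eq_integral (x : ℝ) :
    stdNormalCDF x = ∫ t in Set.Iic x, gaussianPDFReal 0 1 t := by
  rw [stdNormalCDF, gaussianReal_apply_eq_integral 0 one_ne_zero,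
    ENNReal.toReal_ofReal]
  exact setIntegral_nonneg measurableSet_Iic fun t _ => gaussianPDFReal_nonneg 0 1 t

lemma stdNormalCDF_sub (a b : ℝ) :
    stdNormalCDF b - stdNormalCDF a = ∫ t in a..b, gaussianPDFReal 0 1 t := by
  rw [stdNormalCDF_eq_integral, stdNormalCDF_eq_integral]
  exact intervalIntegral.integral_Iic_sub_Iic
    ((integrable_gaussianPDFReal 0 1).integrableOn)
    ((integrable_gaussianPDFReal 0 1).integrableOn)

lemma hasDerivAt_stdNormalCDF (x : ℝ) :
    HasDerivAt stdNormalCDF (gaussianPDFReal 0 1 x) x := by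
  have hF : HasDerivAt (fun u => ∫ t in (0:ℝ)..u, gaussianPDFReal 0 1 t)
      (gaussianPDFReal 0 1 x) x := by
    refine intervalIntegral.integral_hasDerivAt_right
      (stdNormal_pdf_continuous.intervalIntegrable _ _)
      (stdNormal_pdf_continuous.stronglyMeasurable.stronglyMeasurableAtFilter)
      stdNormal_pdf_continuous.continuousAt
  have heq : stdNormalCDF = fun u => stdNormalCDF 0 + ∫ t in (0:ℝ)..u, gaussianPDFReal 0 1 t := by
    funext u
    rw [← stdNormalCDF_sub 0 u]
    ring
  rw [heq]
  have h := (hasDerivAt_const x (stdNormalCDF 0)).add hF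
  rw [zero_add] at h
  exact h

lemma stdNormalCDF_strictMono : StrictMono stdNormalCDF := by
  intro a b hab
  have h := stdNormalCDF_sub a b
  have hpos : 0 < ∫ t in a..b, gaussianPDFReal 0 1 t :=
    intervalIntegral.intervalIntegral_pos_of_pos
      (stdNormal_pdf_continuous.intervalIntegrable _ _) stdNormal_pdf_pos hab
  linarith

lemma stdNormalCDF_continuous : Continuous stdNormalCDF :=
  continuous_iff_continuousAt.mpr fun x => (hasDerivAt_stdNormalCDF x).continuousAt

lemma stdNormalCDF_le_one (x : ℝ) : stdNormalCDF x ≤ 1 := by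
  rw [stdNormalCDF]
  have := prob_le_one (μ := gaussianReal 0 1) (s := Set.Iic x)
  simpa using ENNReal.toReal_mono ENNReal.one_ne_top this

lemma stdNormalCDF_nonneg (x : ℝ) : 0 ≤ stdNormalCDF x := ENNReal.toReal_nonneg

lemma stdNormalCDF_mem_Ioo (x : ℝ) : stdNormalCDF x ∈ Set.Ioo (0:ℝ) 1 := by
  constructor
  · exact lt_of_le_of_lt (stdNormalCDF_nonneg (x - 1))
      (stdNormalCDF_strictMono (by linarith))
  · exact lt_of_lt_of_le (stdNormalCDF_strictMono (show x < x + 1 by linarith))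
      (stdNormalCDF_le_one (x + 1))

lemma tendsto_stdNormalCDF_atTop : Tendsto stdNormalCDF atTop (𝓝 1) := by
  have h := tendsto_measure_Iic_atTop (gaussianReal 0 1)
  rw [measure_univ] at h
  have := (ENNReal.tendsto_toReal ENNReal.one_ne_top).comp h
  exact this

lemma tendsto_stdNormalCDF_atBot : Tendsto stdNormalCDF atBot (𝓝 0) := by
  have h := tendsto_measure_Ici_atBot (gaussianReal 0 1)
  rw [measure_univ] at h
  have h1 : Tendsto (fun x : ℝ => ((gaussianReal 0 1) (Set.Ici (x + 1))).toReal)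
      atBot (𝓝 1) := by
    have := (ENNReal.tendsto_toReal ENNReal.one_ne_top).comp
      (h.comp (tendsto_atBot_add_const_right atBot (1:ℝ) tendsto_id))
    exact this
  have hbound : ∀ x : ℝ, stdNormalCDF x ≤
      1 - ((gaussianReal 0 1) (Set.Ici (x + 1))).toReal := by
    intro x
    have hsub : Set.Iic x ⊆ (Set.Ici (x + 1))ᶜ := by
      intro t ht
      simp only [Set.mem_compl_iff, Set.mem_Ici, not_le]
      exact lt_of_le_of_lt ht (by linarith)
    have hle : (gaussianReal 0 1) (Set.Iic x) ≤ (gaussianReal 0 1) ((Set.Ici (x + 1))ᶜ) :=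
      measure_mono hsub
    have hc : (gaussianReal 0 1) ((Set.Ici (x + 1))ᶜ)
        = 1 - (gaussianReal 0 1) (Set.Ici (x + 1)) := by
      rw [measure_compl measurableSet_Ici (measure_ne_top _ _), measure_univ]
    rw [hc] at hle
    have := ENNReal.toReal_mono (by finiteness) hle
    rw [ENNReal.toReal_sub_of_le prob_le_one ENNReal.one_ne_top] at this
    simpa [stdNormalCDF] using this
  have h2 : Tendsto (fun x : ℝ => 1 - ((gaussianReal 0 1) (Set.Ici (x + 1))).toReal)
      atBot (𝓝 0) := by
    have := (tendsto_const_nhds (x := (1:ℝ)) (f := atBot)).sub h1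
    simpa using this
  exact squeeze_zero (fun x => stdNormalCDF_nonneg x) hbound h2

lemma stdNormalCDF_surjOn : ∀ y ∈ Set.Ioo (0:ℝ) 1, ∃ x, stdNormalCDF x = y := by
  intro y hy
  obtain ⟨a, ha⟩ := (tendsto_stdNormalCDF_atBot.eventually_lt_const hy.1).exists
  obtain ⟨b, hb⟩ := (tendsto_stdNormalCDF_atTop.eventually_const_lt hy.2).exists
  have hab : a ≤ b := le_of_lt (stdNormalCDF_strictMono.lt_iff_lt.mp (ha.trans hb))
  have := intermediate_value_Icc hab stdNormalCDF_continuous.continuousOn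
  obtain ⟨x, _, hx⟩ := this ⟨le_of_lt ha, le_of_lt hb⟩
  exact ⟨x, hx⟩

lemma stdNormalCDFInv_comp (x : ℝ) : stdNormalCDFInv (stdNormalCDF x) = x :=
  Function.leftInverse_invFun stdNormalCDF_strictMono.injective x

lemma stdNormalCDF_comp_inv {y : ℝ} (hy : y ∈ Set.Ioo (0:ℝ) 1) :
    stdNormalCDF (stdNormalCDFInv y) = y := by
  obtain ⟨x, hx⟩ := stdNormalCDF_surjOn y hy
  exact Function.invFun_eq ⟨x, hx⟩

lemma stdNormalCDFInv_continuousAt {y : ℝ} (hy : y ∈ Set.Ioo (0:ℝ) 1) :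
    ContinuousAt stdNormalCDFInv y := by
  have hmono : StrictMonoOn stdNormalCDFInv (Set.Ioo (0:ℝ) 1) := by
    intro y1 h1 y2 h2 hlt
    have e1 := stdNormalCDF_comp_inv h1
    have e2 := stdNormalCDF_comp_inv h2
    refine stdNormalCDF_strictMono.lt_iff_lt.mp ?_
    rw [e1, e2]; exact hlt
  have himg : stdNormalCDFInv '' Set.Ioo (0:ℝ) 1 = Set.univ := by
    ext t
    simp only [Set.mem_image, Set.mem_univ, iff_true]
    exact ⟨stdNormalCDF t, stdNormalCDF_mem_Ioo t, stdNormalCDFInv_comp t⟩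
  refine hmono.continuousAt_of_image_mem_nhds (isOpen_Ioo.mem_nhds hy) ?_
  rw [himg]
  exact Filter.univ_mem

lemma hasDerivAt_stdNormalCDFInv (t : ℝ) :
    HasDerivAt stdNormalCDFInv (gaussianPDFReal 0 1 t)⁻¹ (stdNormalCDF t) := by
  refine HasDerivAt.of_local_left_inverse (f := stdNormalCDF)
    (stdNormalCDFInv_continuousAt (stdNormalCDF_mem_Ioo t)) ?_
    (stdNormal_pdf_pos t).ne' ?_
  · rw [stdNormalCDFInv_comp]
    exact hasDerivAt_stdNormalCDF t
  · filter_upwards [isOpen_Ioo.mem_nhds (stdNormalCDF_mem_Ioo t)] with y hy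
    exact stdNormalCDF_comp_inv hy

end aux

/-- for `ψ > 0`, `ε ≥ 0` and the ROC curve `R(x) = Φ(ψ + Φ⁻¹(x))`, at the
point `x₀ = Φ(−ψ/2 − ε/ψ) ∈ (0,1)` the derivative of `R` equals `e^ε`,
`R(x₀) = Φ(ψ/2 − ε/ψ)`, and the tangent with slope `e^ε` has `y`-intercept
`R(x₀) − e^ε·x₀ = Φ(ψ/2 − ε/ψ) − e^ε·Φ(−ψ/2 − ε/ψ)`. -/
theorem roc_tangent (ψ ε : ℝ) (hψ : 0 < ψ) (hε : 0 ≤ ε) :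
    stdNormalCDF (-ψ / 2 - ε / ψ) ∈ Set.Ioo (0 : ℝ) 1 ∧
    deriv (fun x => stdNormalCDF (ψ + stdNormalCDFInv x))
        (stdNormalCDF (-ψ / 2 - ε / ψ)) = Real.exp ε ∧
    (fun x => stdNormalCDF (ψ + stdNormalCDFInv x)) (stdNormalCDF (-ψ / 2 - ε / ψ)) =
      stdNormalCDF (ψ / 2 - ε / ψ) ∧
    (fun x => stdNormalCDF (ψ + stdNormalCDFInv x)) (stdNormalCDF (-ψ / 2 - ε / ψ)) -
        Real.exp ε * stdNormalCDF (-ψ / 2 - ε / ψ) =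
      stdNormalCDF (ψ / 2 - ε / ψ) - Real.exp ε * stdNormalCDF (-ψ / 2 - ε / ψ) := by
  set t₀ : ℝ := -ψ / 2 - ε / ψ with ht₀
  have hψ' : ψ ≠ 0 := hψ.ne'
  have hadd : ψ + t₀ = ψ / 2 - ε / ψ := by rw [ht₀]; ring
  have hval : (fun x => stdNormalCDF (ψ + stdNormalCDFInv x)) (stdNormalCDF t₀) =
      stdNormalCDF (ψ / 2 - ε / ψ) := by
    simp only [stdNormalCDFInv_comp, hadd]
  refine ⟨stdNormalCDF_mem_Ioo t₀, ?_, hval, by rw [hval]⟩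
  -- derivative computation
  have hinner : HasDerivAt (fun x => ψ + stdNormalCDFInv x)
      (gaussianPDFReal 0 1 t₀)⁻¹ (stdNormalCDF t₀) := by
    have h := (hasDerivAt_const (stdNormalCDF t₀) ψ).add (hasDerivAt_stdNormalCDFInv t₀)
    rw [zero_add] at h
    exact h
  have houter : HasDerivAt stdNormalCDF (gaussianPDFReal 0 1 (ψ + t₀)) (ψ + stdNormalCDFInv (stdNormalCDF t₀)) := by
    rw [stdNormalCDFInv_comp]
    exact hasDerivAt_stdNormalCDF (ψ + t₀)
  have hcomp := houter.comp (stdNormalCDF t₀) hinner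
  rw [show (fun x => stdNormalCDF (ψ + stdNormalCDFInv x)) = stdNormalCDF ∘ (fun x => ψ + stdNormalCDFInv x) from rfl, hcomp.deriv]
    -- now the pdf ratio
  have hpdf : ∀ x : ℝ, gaussianPDFReal 0 1 x
      = (Real.sqrt (2 * Real.pi))⁻¹ * Real.exp (-(x ^ 2) / 2) := by
    intro x
    simp [gaussianPDFReal]
  have hs : (Real.sqrt (2 * Real.pi)) ≠ 0 :=
    (Real.sqrt_pos.mpr (by positivity)).ne'
  rw [hpdf, hpdf, mul_inv, inv_inv, ← Real.exp_neg, mul_mul_mul_comm,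
    inv_mul_cancel₀ hs, one_mul, ← Real.exp_add]
  congr 1
  rw [ht₀]
  field_simp
  ring
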